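/- Let p be a prime, α ≥ 1, and let j, j' be integers with 0 ≤ j ≤ α and 0 ≤ j' ≤ α. The number of quandle endomorphisms f of the dihedral quandle Z_{p^α}^dih with f(0) = 0 and f(p^j mod p^α) = p^{j'} mod p^α equals p^j if j ≤ j', and equals 0 if j > j'. -/
import Mathlib

/-- A quandle endomorphism of the dihedral quandle `Z_n^dih`. -/
def IsDihedralEnd (n : ℕ) (f : ZMod n → ZMod n) : Prop :=
  ∀ x y : ZMod n, f (2 * y - x) = 2 * f y - f x

theorem lin_nat {n : ℕ} {f : ZMod n → ZMod n} (h : IsDihedralEnd n f) (h0 : f 0 = 0) :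
    ∀ k : ℕ, f (k : ZMod n) = f 1 * k := by
  intro k
  induction k using Nat.twoStepInduction with
  | zero => simpa using h0
  | one => simp
  | more k ih1 ih2 =>
    have key := h (k : ZMod n) ((k + 1 : ℕ) : ZMod n)
    have e : (2 : ZMod n) * ((k + 1 : ℕ) : ZMod n) - (k : ZMod n) = ((k + 2 : ℕ) : ZMod n) := by
      push_cast; ring
    rw [e] at key
    rw [key, ih1, ih2]
    push_cast; ring

theorem lin {n : ℕ} [NeZero n] {f : ZMod n → ZMod n} (h : IsDihedralEnd n f) (h0 : f 0 = 0)
    (x : ZMod n) : f x = f 1 * x := by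
  obtain ⟨k, rfl⟩ := ZMod.natCast_rightInverse.surjective x
  exact lin_nat h h0 k

noncomputable def endEquiv (n : ℕ) [NeZero n] (a b : ZMod n) :
    {f : ZMod n → ZMod n // IsDihedralEnd n f ∧ f 0 = 0 ∧ f a = b} ≃ {c : ZMod n // c * a = b} where
  toFun f := ⟨f.1 1, by rw [← lin f.2.1 f.2.2.1 a, f.2.2.2]⟩
  invFun c := ⟨fun x => c.1 * x, fun x y => by ring, by ring, c.2⟩
  left_inv f := by
    apply Subtype.ext; funext x; exact (lin f.2.1 f.2.2.1 x).symm
  right_inv c := by apply Subtype.ext; simp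

theorem card_sol (p : ℕ) (hppos : 0 < p) (α j j' : ℕ) (hj : j ≤ α) (hle : j ≤ j') :
    Nat.card {c : ZMod (p ^ α) // c * ((p ^ j : ℕ) : ZMod (p ^ α)) = ((p ^ j' : ℕ) : ZMod (p ^ α))}
      = p ^ j := by
  haveI : NeZero (p ^ α) := ⟨pow_ne_zero _ hppos.ne'⟩
  haveI : NeZero (p ^ j) := ⟨pow_ne_zero _ hppos.ne'⟩
  have hsplit : p ^ α = p ^ j * p ^ (α - j) := by rw [← pow_add]; congr 1; omega
  have key : ∀ t : ZMod (p ^ j),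
      ((p ^ (j' - j) + t.val * p ^ (α - j) : ℕ) : ZMod (p ^ α)) * ((p ^ j : ℕ) : ZMod (p ^ α))
        = ((p ^ j' : ℕ) : ZMod (p ^ α)) := by
    intro t
    have e : (p ^ (j' - j) + t.val * p ^ (α - j)) * p ^ j = p ^ j' + t.val * p ^ α := by
      have e1 : j' - j + j = j' := by omega
      have e2 : α - j + j = α := by omega
      rw [add_mul, mul_assoc, ← pow_add, ← pow_add, e1, e2]
    rw [← Nat.cast_mul, e, Nat.cast_add, Nat.cast_mul, ZMod.natCast_self, mul_zero, add_zero]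
  refine Eq.trans (Nat.card_congr
    (Equiv.ofBijective (fun t : ZMod (p ^ j) => (⟨_, key t⟩ :
      {c : ZMod (p ^ α) // c * ((p ^ j : ℕ) : ZMod (p ^ α)) = ((p ^ j' : ℕ) : ZMod (p ^ α))}))
      ⟨?_, ?_⟩).symm) (Nat.card_zmod _)
  · intro t s hts
    have h1 : (p ^ (j' - j) + t.val * p ^ (α - j) : ℕ) ≡
        (p ^ (j' - j) + s.val * p ^ (α - j) : ℕ) [MOD p ^ α] := by
      rw [← ZMod.natCast_eq_natCast_iff]
      exact_mod_cast congrArg Subtype.val hts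
    have h2 : t.val * p ^ (α - j) ≡ s.val * p ^ (α - j) [MOD p ^ α] :=
      h1.add_left_cancel' _
    unfold Nat.ModEq at h2
    rw [hsplit, Nat.mul_mod_mul_right, Nat.mul_mod_mul_right] at h2
    have h3 : t.val % p ^ j = s.val % p ^ j :=
      Nat.eq_of_mul_eq_mul_right (pow_pos hppos _) h2
    rw [Nat.mod_eq_of_lt (ZMod.val_lt t), Nat.mod_eq_of_lt (ZMod.val_lt s)] at h3
    exact ZMod.val_injective _ h3
  · rintro ⟨c, hc⟩
    have h1 : (c.val * p ^ j : ℕ) ≡ (p ^ j' : ℕ) [MOD p ^ α] := by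
      rw [← ZMod.natCast_eq_natCast_iff, Nat.cast_mul, ZMod.natCast_val, ZMod.cast_id]
      exact hc
    have h2 : ((p ^ α : ℕ) : ℤ) ∣ ((p ^ j' : ℕ) : ℤ) - ((c.val * p ^ j : ℕ) : ℤ) :=
      (Nat.modEq_iff_dvd).mp h1
    have hpj : ((p : ℤ) ^ j) ≠ 0 := pow_ne_zero _ (by exact_mod_cast hppos.ne')
    have h3 : (p : ℤ) ^ (α - j) ∣ ((p : ℤ) ^ (j' - j) - (c.val : ℤ)) := by
      apply (mul_dvd_mul_iff_left hpj).mp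
      have e1 : (p : ℤ) ^ j * ((p : ℤ) ^ (j' - j) - (c.val : ℤ))
          = ((p ^ j' : ℕ) : ℤ) - ((c.val * p ^ j : ℕ) : ℤ) := by
        have hj'' : (p : ℤ) ^ j' = (p : ℤ) ^ j * (p : ℤ) ^ (j' - j) := by
          rw [← pow_add]; congr 1; omega
        push_cast
        rw [hj'']
        ring
      have e2 : (p : ℤ) ^ j * (p : ℤ) ^ (α - j) = ((p ^ α : ℕ) : ℤ) := by
        push_cast
        rw [← pow_add]
        congr 1; omega
      rw [e1, e2]
      exact h2
    obtain ⟨k, hk⟩ := h3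
    refine ⟨((-k : ℤ) : ZMod (p ^ j)), Subtype.ext ?_⟩
    set t : ZMod (p ^ j) := ((-k : ℤ) : ZMod (p ^ j)) with ht
    show ((p ^ (j' - j) + t.val * p ^ (α - j) : ℕ) : ZMod (p ^ α)) = c
    have htv : ((p ^ j : ℕ) : ℤ) ∣ ((t.val : ℤ) - (-k)) := by
      rw [← ZMod.intCast_zmod_eq_zero_iff_dvd]
      push_cast
      rw [ZMod.natCast_val, ZMod.cast_id, ht]
      push_cast
      ring
    obtain ⟨m, hm⟩ := htv
    have hcv : ((c.val : ℕ) : ZMod (p ^ α)) = c := by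
      rw [ZMod.natCast_val, ZMod.cast_id]
    rw [← hcv, ZMod.natCast_eq_natCast_iff, Nat.modEq_iff_dvd]
    -- goal : (p^α : ℤ) ∣ c.val - (p^(j'-j) + t.val * p^(α-j))
    have : ((c.val : ℕ) : ℤ) - ((p ^ (j' - j) + t.val * p ^ (α - j) : ℕ) : ℤ)
        = ((p ^ α : ℕ) : ℤ) * (-m) := by
      have hc' : (c.val : ℤ) = (p : ℤ) ^ (j' - j) - (p : ℤ) ^ (α - j) * k := by linarith [hk]
      have htv' : (t.val : ℤ) = ((p ^ j : ℕ) : ℤ) * m - k := by linarith [hm]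
      push_cast at htv'
      push_cast
      rw [hc', htv']
      rw [show (p:ℤ) ^ α = (p:ℤ) ^ j * (p:ℤ) ^ (α - j) by rw [← pow_add]; congr 1; omega]
      ring
    rw [this]
    exact Dvd.intro _ rfl

theorem card_end_between_prime_power_reps (p : ℕ) (hp : p.Prime) (α : ℕ) (hα : 1 ≤ α)
    (j j' : ℕ) (hj : j ≤ α) (hj' : j' ≤ α) :
    Nat.card {f : ZMod (p ^ α) → ZMod (p ^ α) // IsDihedralEnd (p ^ α) f ∧
        f 0 = 0 ∧ f ((p : ZMod (p ^ α)) ^ j) = (p : ZMod (p ^ α)) ^ j'} =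
      if j ≤ j' then p ^ j else 0 := by
  haveI : NeZero (p ^ α) := ⟨pow_ne_zero _ hp.pos.ne'⟩
  rw [Nat.card_congr (endEquiv (p ^ α) ((p : ZMod (p ^ α)) ^ j) ((p : ZMod (p ^ α)) ^ j'))]
  have hcast : ∀ m : ℕ, (p : ZMod (p ^ α)) ^ m = ((p ^ m : ℕ) : ZMod (p ^ α)) := by
    intro m; push_cast; ring
  simp only [hcast]
  by_cases hle : j ≤ j'
  · rw [if_pos hle]
    exact card_sol p hp.pos α j j' hj hle
  · rw [if_neg hle]
    rw [Nat.card_eq_zero]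
    left
    constructor
    rintro ⟨c, hc⟩
    have h1 := congrArg (· * ((p ^ (α - 1 - j') : ℕ) : ZMod (p ^ α))) hc
    simp only [mul_assoc, ← Nat.cast_mul, ← pow_add] at h1
    have hL : ((p ^ (j + (α - 1 - j')) : ℕ) : ZMod (p ^ α)) = 0 := by
      rw [ZMod.natCast_eq_zero_iff]
      exact pow_dvd_pow p (by omega)
    have hR : ((p ^ (j' + (α - 1 - j')) : ℕ) : ZMod (p ^ α)) ≠ 0 := by
      intro h0
      rw [ZMod.natCast_eq_zero_iff,
        show j' + (α - 1 - j') = α - 1 by omega,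
        Nat.pow_dvd_pow_iff_le_right hp.one_lt] at h0
      omega
    rw [hL, mul_zero] at h1
    exact hR h1.symm
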